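/- (Lemma 2, deterministic form) Consider the UCB-with-attack process with θ = 1.1. Assume event E holds, i.e., for every arm i and round t with N_i(t) ≥ 1, |μ̂⁰_i(t) − μ_i| < β(N_i(t)). Then for every round t > K and every non-target arm i ≠ K, N_i(t) ≤ ⌈log_θ(sqrt(log t))⌉. -/

import Mathlib

open Real Finset

/-- `β(n) = sqrt((2σ²/n) · log(π²·K·n²/(3δ)))` for integers `n ≥ 1`. -/
noncomputable def attackBeta (σ : ℝ) (K : ℕ) (δ : ℝ) (n : ℕ) : ℝ :=
  Real.sqrt (2 * σ ^ 2 / n * Real.log (Real.pi ^ 2 * K * n ^ 2 / (3 * δ)))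


private lemma log_div_mono {C x y : ℝ} (hC : Real.exp 2 ≤ C) (hx : 1 ≤ x) (hxy : x ≤ y) :
    Real.log (C * y ^ 2) / y ≤ Real.log (C * x ^ 2) / x := by
  have hx0 : (0:ℝ) < x := by linarith
  have hy0 : (0:ℝ) < y := by linarith
  have hC0 : (0:ℝ) < C := lt_of_lt_of_le (Real.exp_pos 2) hC
  have hlogC : (2:ℝ) ≤ Real.log C := by
    rw [Real.le_log_iff_exp_le hC0]; exact hC
  have hlx : (0:ℝ) ≤ Real.log x := Real.log_nonneg hx
  have hkey : x * (Real.log y - Real.log x) ≤ y - x := by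
    have h1 : Real.log y - Real.log x = Real.log (y / x) :=
      (Real.log_div (by linarith) (by linarith)).symm
    rw [h1]
    have h2 : Real.log (y / x) ≤ y / x - 1 := Real.log_le_sub_one_of_pos (by positivity)
    calc x * Real.log (y/x) ≤ x * (y/x - 1) := by nlinarith
      _ = y - x := by field_simp
  rw [div_le_div_iff₀ hy0 hx0,
    Real.log_mul (ne_of_gt hC0) (by positivity), Real.log_mul (ne_of_gt hC0) (by positivity),
    Real.log_pow, Real.log_pow]
  push_cast
  nlinarith [hkey, mul_nonneg (sub_nonneg.mpr hxy) hlx,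
    mul_le_mul_of_nonneg_left hlogC (sub_nonneg.mpr hxy)]

private lemma attackBeta_mono (σ δ : ℝ) (K : ℕ) (hσ : 0 < σ) (hK : 2 ≤ K)
    (hδ : 0 < δ) (hδ' : δ ≤ 1/2) {n m : ℕ} (hn : 1 ≤ n) (hnm : n ≤ m) :
    attackBeta σ K δ m ≤ attackBeta σ K δ n := by
  unfold attackBeta
  apply Real.sqrt_le_sqrt
  have hK' : (2:ℝ) ≤ (K:ℝ) := by exact_mod_cast hK
  have hC : Real.exp 2 ≤ Real.pi ^ 2 * K / (3 * δ) := by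
    rw [le_div_iff₀ (by positivity)]
    have hpi : 3.141592 < Real.pi := Real.pi_gt_d6
    have hexp : Real.exp 2 < 7.39 := by
      have h1 := Real.exp_one_lt_d9
      have h2 : Real.exp 2 = Real.exp 1 * Real.exp 1 := by
        rw [← Real.exp_add]; norm_num
      nlinarith [Real.exp_pos 1]
    nlinarith
  have hn' : (1:ℝ) ≤ (n:ℝ) := by exact_mod_cast hn
  have hnm' : (n:ℝ) ≤ (m:ℝ) := by exact_mod_cast hnm
  have key := log_div_mono hC hn' hnm'
  have e1 : Real.pi^2 * K * (m:ℝ)^2 / (3*δ) = (Real.pi^2*K/(3*δ)) * (m:ℝ)^2 := by ring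
  have e2 : Real.pi^2 * K * (n:ℝ)^2 / (3*δ) = (Real.pi^2*K/(3*δ)) * (n:ℝ)^2 := by ring
  rw [e1, e2]
  have hσ2 : (0:ℝ) ≤ 2*σ^2 := by positivity
  calc 2*σ^2/(m:ℝ) * Real.log ((Real.pi^2*K/(3*δ))*(m:ℝ)^2)
      = 2*σ^2 * (Real.log ((Real.pi^2*K/(3*δ))*(m:ℝ)^2)/(m:ℝ)) := by ring
    _ ≤ 2*σ^2 * (Real.log ((Real.pi^2*K/(3*δ))*(n:ℝ)^2)/(n:ℝ)) :=
        mul_le_mul_of_nonneg_left key hσ2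
    _ = 2*σ^2/(n:ℝ) * Real.log ((Real.pi^2*K/(3*δ))*(n:ℝ)^2) := by ring

/-- Lemma 2 (deterministic form). For the UCB-with-attack process with `θ = 1.1`,
on the event `E` (all pre-attack empirical means concentrate within `β` of the
true means), every non-target arm is pulled at most `⌈log_θ √(log t)⌉` times in
the first `t` rounds, for every `t > K`.

Process data: `r i n` is the pre-attack reward of the `n`-th pull of arm `i`,
`tgt` the target arm, `I t` the arm pulled in round `t`, `N i t` the number of
pulls of arm `i` in rounds `1..t`, `hatμ0 i t` / `hatμ i t` the pre- and post-attack
empirical means of arm `i` after `t` rounds, and `α t` the attack in round `t`. -/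
theorem nontarget_pulls_le (σ δ : ℝ) (K : ℕ) (hσ : 0 < σ) (hK : 1 ≤ K)
    (hδ : 0 < δ) (hδ' : δ ≤ 1 / 2)
    (μ : Fin K → ℝ) (r : Fin K → ℕ → ℝ) (tgt : Fin K)
    (I : ℕ → Fin K) (N : Fin K → ℕ → ℕ)
    (hatμ0 hatμ : Fin K → ℕ → ℝ) (α : ℕ → ℝ)
    -- pull counts
    (hN : ∀ i t, N i t = ((Finset.Icc 1 t).filter (fun s => I s = i)).card)
    -- initialization: arm `tgt` is pulled in round 1, each arm once in rounds 1..K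
    (hI1 : I 1 = tgt)
    (hinit : ∀ i, N i K = 1)
    -- pre-attack empirical means
    (hμ0 : ∀ i t, 1 ≤ N i t →
      hatμ0 i t = (∑ j ∈ Finset.Icc 1 (N i t), r i j) / (N i t))
    -- post-attack empirical means
    (hμ : ∀ i t, 1 ≤ N i t →
      hatμ i t = ((∑ j ∈ Finset.Icc 1 (N i t), r i j)
        - ∑ s ∈ (Finset.Icc 1 t).filter (fun s => I s = i), α s) / (N i t))
    -- UCB arm selection after the initialization rounds
    (hUCB : ∀ t, K < t → ∀ i : Fin K,
      hatμ i (t - 1) + 3 * σ * Real.sqrt (Real.log t / N i (t - 1))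
        ≤ hatμ (I t) (t - 1) + 3 * σ * Real.sqrt (Real.log t / N (I t) (t - 1)))
    -- pulls of the target arm are never attacked
    (hαtgt : ∀ t, I t = tgt → α t = 0)
    -- attack rule: after any pull of a non-target arm, the smallest (in absolute
    -- value) nonnegative attack ensuring the post-attack mean drops below
    -- `hatμ tgt t − 2β(N_tgt(t)) − 3σθ^{N_i(t)}`
    (hatk : ∀ t, 1 ≤ t → I t ≠ tgt →
      0 ≤ α t ∧
      hatμ (I t) t ≤ hatμ tgt t - 2 * attackBeta σ K δ (N tgt t)
        - 3 * σ * (1.1 : ℝ) ^ (N (I t) t) ∧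
      (α t ≠ 0 → hatμ (I t) t = hatμ tgt t - 2 * attackBeta σ K δ (N tgt t)
        - 3 * σ * (1.1 : ℝ) ^ (N (I t) t)))
    -- event E
    (hE : ∀ i t, 1 ≤ N i t → |hatμ0 i t - μ i| < attackBeta σ K δ (N i t)) :
    ∀ t, K < t → ∀ i : Fin K, i ≠ tgt →
      (N i t : ℤ) ≤ ⌈Real.logb 1.1 (Real.sqrt (Real.log t))⌉ := by
  intro t ht i hi
  -- K ≥ 2
  have hK2 : 2 ≤ K := by
    by_contra h
    have hK1 : K = 1 := by omega
    subst hK1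
    exact hi (by omega)
  have ht3 : 3 ≤ t := by omega
  -- √(log t) > 1, so the ceiling is ≥ 1
  have hlogt1 : 1 < Real.log t := by
    have he : Real.exp 1 < 3 := by nlinarith [Real.exp_one_lt_d9]
    have : Real.exp 1 < (t:ℝ) := by
      have : (3:ℝ) ≤ t := by exact_mod_cast ht3
      linarith
    calc (1:ℝ) = Real.log (Real.exp 1) := by simp
      _ < Real.log t := Real.log_lt_log (Real.exp_pos 1) this
  have hsq1 : 1 < Real.sqrt (Real.log t) := by
    have := Real.sqrt_lt_sqrt (by norm_num : (0:ℝ) ≤ 1) hlogt1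
    simpa using this
  have hceil1 : 1 ≤ ⌈Real.logb 1.1 (Real.sqrt (Real.log t))⌉ := by
    have h0 : (0:ℝ) < Real.logb 1.1 (Real.sqrt (Real.log t)) :=
      Real.logb_pos (by norm_num) hsq1
    have : (0:ℤ) < ⌈Real.logb 1.1 (Real.sqrt (Real.log t))⌉ :=
      Int.lt_ceil.mpr (by push_cast; exact h0)
    omega
  rcases Nat.lt_or_ge (N i t) 2 with hsmall | hbig
  · have : (N i t : ℤ) ≤ 1 := by exact_mod_cast Nat.lt_succ_iff.mp hsmall
    omega
  -- main case: N i t ≥ 2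
  have hNmono : ∀ (j : Fin K) (a b : ℕ), a ≤ b → N j a ≤ N j b := by
    intro j a b hab
    rw [hN, hN]
    exact Finset.card_le_card
      (Finset.filter_subset_filter _ (Finset.Icc_subset_Icc_right hab))
  have hNtgt : ∀ u, 1 ≤ u → 1 ≤ N tgt u := by
    intro u hu
    rw [hN]
    refine Finset.card_pos.mpr ⟨1, ?_⟩
    simp [Finset.mem_filter, Finset.mem_Icc, hI1, hu]
  have htgteq : ∀ u, 1 ≤ N tgt u → hatμ tgt u = hatμ0 tgt u := by
    intro u hu
    rw [hμ tgt u hu, hμ0 tgt u hu]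
    have hz : ∑ x ∈ (Finset.Icc 1 u).filter (fun s => I s = tgt), α x = 0 :=
      Finset.sum_eq_zero (fun x hx => hαtgt x (Finset.mem_filter.mp hx).2)
    rw [hz]; ring
  have hsame : ∀ (j : Fin K) (a b : ℕ), a ≤ b → N j a = N j b → 1 ≤ N j a →
      hatμ j a = hatμ j b := by
    intro j a b hab hNab h1
    have hset : (Finset.Icc 1 a).filter (fun s => I s = j)
        = (Finset.Icc 1 b).filter (fun s => I s = j) := by
      apply Finset.eq_of_subset_of_card_le
      · exact Finset.filter_subset_filter _ (Finset.Icc_subset_Icc_right hab)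
      · rw [← hN, ← hN]; omega
    rw [hμ j a h1, hμ j b (hNab ▸ h1), hset, hNab]
  -- last pull s of arm i in (K, t]
  set S := (Finset.Icc 1 t).filter (fun s => I s = i) with hSdef
  have hScard : S.card = N i t := (hN i t).symm
  have hSne : S.Nonempty := Finset.card_pos.mp (by omega)
  set s := S.max' hSne with hsdef
  have hsmem : s ∈ S := S.max'_mem hSne
  have hs1 : 1 ≤ s := (Finset.mem_Icc.mp (Finset.mem_filter.mp hsmem).1).1
  have hst : s ≤ t := (Finset.mem_Icc.mp (Finset.mem_filter.mp hsmem).1).2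
  have hIs : I s = i := (Finset.mem_filter.mp hsmem).2
  have hsK : K < s := by
    by_contra hle
    push_neg at hle
    have hsub : S ⊆ (Finset.Icc 1 K).filter (fun u => I u = i) := by
      intro x hx
      have hxs : x ≤ s := S.le_max' x hx
      have := Finset.mem_filter.mp hx
      have hx1 := (Finset.mem_Icc.mp this.1).1
      exact Finset.mem_filter.mpr ⟨Finset.mem_Icc.mpr ⟨hx1, le_trans hxs hle⟩, this.2⟩
    have : N i t ≤ N i K := by
      rw [← hScard, hN i K]
      exact Finset.card_le_card hsub
    rw [hinit i] at this
    omega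
  -- N i s = N i t
  have hNis : N i s = N i t := by
    rw [hN i s, ← hScard]
    congr 1
    apply Finset.eq_of_subset_of_card_le
    · exact Finset.filter_subset_filter _ (Finset.Icc_subset_Icc_right hst)
    · apply Finset.card_le_card
      intro x hx
      have hxs : x ≤ s := S.le_max' x hx
      have := Finset.mem_filter.mp hx
      exact Finset.mem_filter.mpr
        ⟨Finset.mem_Icc.mpr ⟨(Finset.mem_Icc.mp this.1).1, hxs⟩, this.2⟩
  -- step: N i s = N i (s-1) + 1
  have hstep : N i s = N i (s-1) + 1 := by
    rw [hN i s, hN i (s-1)]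
    have hins : (Finset.Icc 1 s).filter (fun u => I u = i)
        = insert s ((Finset.Icc 1 (s-1)).filter (fun u => I u = i)) := by
      ext x
      simp only [Finset.mem_filter, Finset.mem_Icc, Finset.mem_insert]
      constructor
      · rintro ⟨⟨h1, h2⟩, h3⟩
        rcases eq_or_lt_of_le h2 with rfl | hlt
        · exact Or.inl rfl
        · exact Or.inr ⟨⟨h1, by omega⟩, h3⟩
      · rintro (rfl | ⟨⟨h1, h2⟩, h3⟩)
        · exact ⟨⟨hs1, le_refl _⟩, hIs⟩
        · exact ⟨⟨h1, by omega⟩, h3⟩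
    rw [hins, Finset.card_insert_of_notMem]
    simp only [Finset.mem_filter, Finset.mem_Icc]
    rintro ⟨⟨_, h⟩, _⟩
    omega
  set n := N i (s-1) with hndef
  have hn1 : 1 ≤ n := by omega
  -- previous pull s'' of arm i, at or before s-1
  set S' := (Finset.Icc 1 (s-1)).filter (fun u => I u = i) with hS'def
  have hS'card : S'.card = n := (hN i (s-1)).symm
  have hS'ne : S'.Nonempty := Finset.card_pos.mp (by omega)
  set p : ℕ := S'.max' hS'ne with hpdef
  have hpmem : p ∈ S' := S'.max'_mem hS'ne
  have hp1 : 1 ≤ p := (Finset.mem_Icc.mp (Finset.mem_filter.mp hpmem).1).1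
  have hps : p ≤ s - 1 := (Finset.mem_Icc.mp (Finset.mem_filter.mp hpmem).1).2
  have hIp : I p = i := (Finset.mem_filter.mp hpmem).2
  have hNip : N i p = n := by
    rw [hN i p, ← hS'card]
    congr 1
    apply Finset.eq_of_subset_of_card_le
    · exact Finset.filter_subset_filter _ (Finset.Icc_subset_Icc_right hps)
    · apply Finset.card_le_card
      intro x hx
      have hxs : x ≤ p := S'.le_max' x hx
      have := Finset.mem_filter.mp hx
      exact Finset.mem_filter.mpr
        ⟨Finset.mem_Icc.mpr ⟨(Finset.mem_Icc.mp this.1).1, hxs⟩, this.2⟩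
  -- attack guarantee at round p
  have hIptgt : I p ≠ tgt := by rw [hIp]; exact hi
  obtain ⟨-, hattack, -⟩ := hatk p hp1 hIptgt
  rw [hIp, hNip] at hattack
  -- hatμ i p = hatμ i (s-1)
  have heq1 : hatμ i p = hatμ i (s-1) := by
    apply hsame i p (s-1) hps (by rw [hNip])
    rw [hNip]; exact hn1
  -- event E facts about the target arm
  have hNtp : 1 ≤ N tgt p := hNtgt p hp1
  have hNts : 1 ≤ N tgt (s-1) := hNtgt (s-1) (by omega)
  have hEp := hE tgt p hNtp
  have hEs := hE tgt (s-1) hNts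
  rw [abs_lt] at hEp hEs
  rw [htgteq p hNtp] at hattack
  -- β monotonicity
  have hβ : attackBeta σ K δ (N tgt (s-1)) ≤ attackBeta σ K δ (N tgt p) :=
    attackBeta_mono σ δ K hσ hK2 hδ hδ' hNtp (hNmono tgt p (s-1) hps)
  -- chain: hatμ i (s-1) < hatμ tgt (s-1) - 3σ(1.1)^n
  have hchain : hatμ i (s-1) < hatμ tgt (s-1) - 3 * σ * (1.1:ℝ)^n := by
    rw [htgteq (s-1) hNts]
    have := hEp.2  -- hatμ0 tgt p - μ tgt < β(N tgt p)
    have := hEs.1  -- -β(N tgt (s-1)) < hatμ0 tgt (s-1) - μ tgt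
    rw [← heq1]
    linarith [hattack, hEp.2, hEs.1, hβ]
  -- UCB comparison at round s
  have hucb := hUCB s hsK tgt
  rw [hIs] at hucb
  -- conclude 1.1^n < sqrt(log t)
  have hlogs : (0:ℝ) < Real.log s := by
    have h3s : (3:ℝ) ≤ s := by exact_mod_cast (by omega : 3 ≤ s)
    have : (1:ℝ) < s := by linarith
    exact Real.log_pos this
  have hsq_nonneg : (0:ℝ) ≤ Real.sqrt (Real.log s / N tgt (s-1)) := Real.sqrt_nonneg _
  have hpow_lt : (1.1:ℝ)^n < Real.sqrt (Real.log s / n) := by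
    nlinarith [hucb, hchain, hsq_nonneg]
  have hsq2 : Real.sqrt (Real.log s / n) ≤ Real.sqrt (Real.log s) := by
    apply Real.sqrt_le_sqrt
    apply div_le_self (le_of_lt hlogs)
    exact_mod_cast hn1
  have hsq3 : Real.sqrt (Real.log s) ≤ Real.sqrt (Real.log t) := by
    apply Real.sqrt_le_sqrt
    apply Real.log_le_log (by positivity)
    exact_mod_cast hst
  have hfinal : (1.1:ℝ)^n < Real.sqrt (Real.log t) := by linarith
  -- take logb
  have hlogb : (n:ℝ) < Real.logb 1.1 (Real.sqrt (Real.log t)) := by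
    have h1 : Real.logb 1.1 ((1.1:ℝ)^n) < Real.logb 1.1 (Real.sqrt (Real.log t)) :=
      Real.logb_lt_logb (by norm_num) (by positivity) hfinal
    have h2 : Real.logb 1.1 ((1.1:ℝ)^n) = n := by
      rw [Real.logb_pow, Real.logb_self_eq_one (by norm_num : (1:ℝ) < 1.1), mul_one]
    linarith [h2 ▸ h1]
  have : (n:ℤ) < ⌈Real.logb 1.1 (Real.sqrt (Real.log t))⌉ := by
    apply Int.lt_ceil.mpr
    exact_mod_cast hlogb
  have hNit : N i t = n + 1 := by omega
  omega
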